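/- Let x = (x_n)_{n≥2} and y = (y_n)_{n≥2} be sequences with x_n, y_n ∈ {1,…,n}, let C ≥ 0, λ ≥ 1, let A ⊆ M_x be a C-net with P⁺_{x,2} ∈ A, let B ⊆ M_y be a C-net with P⁺_{y,2} ∈ B, and let φ : A → B be a λ-bi-Lipschitz bijection with φ(P⁺_{x,2}) = P⁺_{y,2}. Then there exists N ≥ 2 such that φ(M_{x,n} ∩ A) = M_{y,n} ∩ B for all n ≥ N. -/

import Mathlib

noncomputable section

/-- The tree distance on `ℝ²`. -/
def treeDist (p q : ℝ × ℝ) : ℝ :=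
  if p.1 = q.1 then |p.2 - q.2| else |p.2| + |p.1 - q.1| + |q.2|

/-- `∑_{i=2}^n e^{i²}`. -/
def expSum (n : ℕ) : ℝ := ∑ i ∈ Finset.Icc 2 n, Real.exp ((i : ℝ) ^ 2)

/-- `P⁺_{x,n} = (∑_{i=2}^n e^{i²}, e^{x_n})`. -/
def Pp (x : ℕ → ℕ) (n : ℕ) : ℝ × ℝ := (expSum n, Real.exp (x n))

/-- `P⁻_{x,n} = (∑_{i=2}^n e^{i²}, −e^{x_n})`. -/
def Pm (x : ℕ → ℕ) (n : ℕ) : ℝ × ℝ := (expSum n, -Real.exp (x n))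

/-- `M_{x,n} = {P⁺_{x,n}, P⁻_{x,n}}`. -/
def Mpart (x : ℕ → ℕ) (n : ℕ) : Set (ℝ × ℝ) := {Pp x n, Pm x n}

/-- `M_x = ⋃_{n≥2} M_{x,n}`. -/
def Mset (x : ℕ → ℕ) : Set (ℝ × ℝ) := ⋃ n ∈ {m : ℕ | 2 ≤ m}, Mpart x n

/-- `x = (x_n)_{n≥2}` is a sequence with `x_n ∈ {1,…,n}`. -/
def SeqOK (x : ℕ → ℕ) : Prop := ∀ n, 2 ≤ n → 1 ≤ x n ∧ x n ≤ n

/-- `A` is a `C`-net in `(M_x, d_x)`: `A ⊆ M_x` and every point of `M_x` is at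
distance (infimum) at most `C` from `A`. -/
def IsNet (x : ℕ → ℕ) (C : ℝ) (A : Set (ℝ × ℝ)) : Prop :=
  A ⊆ Mset x ∧ ∀ p ∈ Mset x, ∀ ε > 0, ∃ a ∈ A, treeDist p a ≤ C + ε

/-- `φ : A → B` is a `λ`-bi-Lipschitz bijection. -/
def IsBiLipOn (lam : ℝ) (A B : Set (ℝ × ℝ)) (φ : ℝ × ℝ → ℝ × ℝ) : Prop :=
  Set.BijOn φ A B ∧ ∀ p ∈ A, ∀ q ∈ A,
    lam⁻¹ * treeDist p q ≤ treeDist (φ p) (φ q) ∧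
    treeDist (φ p) (φ q) ≤ lam * treeDist p q

lemma expSum_nonneg (n : ℕ) : 0 ≤ expSum n :=
  Finset.sum_nonneg fun i _ => (Real.exp_pos _).le

lemma expSum_succ {n : ℕ} (h : 1 ≤ n) :
    expSum (n + 1) = expSum n + Real.exp ((n + 1 : ℕ) ^ 2) := by
  unfold expSum
  rw [Finset.sum_Icc_succ_top (by omega)]

lemma expSum_mono {m n : ℕ} (h : m ≤ n) : expSum m ≤ expSum n := by
  apply Finset.sum_le_sum_of_subset_of_nonneg
  · exact Finset.Icc_subset_Icc le_rfl h
  · exact fun i _ _ => (Real.exp_pos _).le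

lemma expSum_sub_ge {m n : ℕ} (h2 : 2 ≤ m) (h : m < n) :
    expSum m + Real.exp ((n : ℝ) ^ 2) ≤ expSum n := by
  obtain ⟨k, rfl⟩ : ∃ k, n = k + 1 := ⟨n - 1, by omega⟩
  rw [expSum_succ (by omega)]
  have : expSum m ≤ expSum k := expSum_mono (by omega)
  push_cast
  linarith

lemma expSum_lt {m n : ℕ} (h2 : 2 ≤ m) (h : m < n) : expSum m < expSum n :=
  lt_of_lt_of_le (by linarith [Real.exp_pos ((n : ℝ) ^ 2)]) (expSum_sub_ge h2 h)

lemma expSum_le (n : ℕ) : expSum n ≤ n * Real.exp ((n : ℝ) ^ 2) := by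
  calc expSum n ≤ (Finset.Icc 2 n).card • Real.exp ((n : ℝ) ^ 2) := by
        apply Finset.sum_le_card_nsmul
        intro i hi
        simp only [Finset.mem_Icc] at hi
        exact Real.exp_le_exp.mpr (by
          have hin : (i : ℝ) ≤ n := Nat.cast_le.mpr hi.2
          nlinarith [Nat.cast_nonneg (α := ℝ) i])
    _ ≤ n * Real.exp ((n : ℝ) ^ 2) := by
        rw [nsmul_eq_mul, Nat.card_Icc]
        exact mul_le_mul_of_nonneg_right (Nat.cast_le.mpr (by omega)) (Real.exp_pos _).le

lemma fst_of_mem_Mpart {x : ℕ → ℕ} {m : ℕ} {p : ℝ × ℝ} (hp : p ∈ Mpart x m) :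
    p.1 = expSum m := by
  rcases hp with rfl | rfl <;> rfl

lemma mem_Mset_iff {x : ℕ → ℕ} {p : ℝ × ℝ} :
    p ∈ Mset x ↔ ∃ m, 2 ≤ m ∧ p ∈ Mpart x m := by
  simp [Mset, Set.mem_iUnion]

lemma dist_base_bounds (x : ℕ → ℕ) (hx : SeqOK x) {m : ℕ} (hm : 2 ≤ m)
    {p : ℝ × ℝ} (hp : p ∈ Mpart x m) :
    expSum m - expSum 2 ≤ treeDist (Pp x 2) p ∧
    treeDist (Pp x 2) p ≤ (expSum m - expSum 2) + Real.exp 2 + Real.exp m := by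
  have hx2 := hx 2 le_rfl
  have hxm := hx m hm
  have he2 : Real.exp (x 2) ≤ Real.exp 2 :=
    Real.exp_le_exp.mpr (by exact_mod_cast hx2.2)
  have hem : Real.exp (x m) ≤ Real.exp m :=
    Real.exp_le_exp.mpr (by exact_mod_cast hxm.2)
  have hpos2 := Real.exp_pos ((x 2 : ℝ))
  have hposm := Real.exp_pos ((x m : ℝ))
  rcases eq_or_lt_of_le hm with h2 | h3
  · -- m = 2
    subst h2
    rcases hp with rfl | rfl <;>
    · simp only [treeDist, Pp, Pm, if_pos rfl, if_true]
      refine ⟨by simpa using abs_nonneg _, ?_⟩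
      rw [abs_le]
      constructor <;> nlinarith
  · -- 2 < m
    have hne : expSum 2 ≠ expSum m := ne_of_lt (expSum_lt le_rfl h3)
    have hsub : (0:ℝ) ≤ expSum m - expSum 2 := by
      linarith [expSum_lt (le_refl 2) h3]
    have habs : |expSum 2 - expSum m| = expSum m - expSum 2 := by
      rw [abs_sub_comm]; exact abs_of_nonneg hsub
    rcases hp with rfl | rfl <;>
    · simp only [treeDist, Pp, Pm, if_neg hne, abs_neg, hne, ↓reduceIte]
      rw [abs_of_pos hpos2, abs_of_pos hposm, habs]
      constructor <;> nlinarith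

lemma key_ineq {lam : ℝ} (hlam : 1 ≤ lam) {m n : ℕ}
    (hm : 2 ≤ m) (hmn : m < n) (hN : Nat.ceil lam + 3 ≤ n) :
    lam * ((expSum m - expSum 2) + Real.exp 2 + Real.exp m) < expSum n - expSum 2 := by
  obtain ⟨k, rfl⟩ : ∃ k, n = k + 1 := ⟨n - 1, by omega⟩
  have hk2 : 2 ≤ k := by omega
  have hkR : (2:ℝ) ≤ (k:ℝ) := by exact_mod_cast hk2
  have hmk : m ≤ k := by omega
  set E := Real.exp ((k:ℝ)^2) with hE
  have hEpos : 0 < E := Real.exp_pos _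
  have h1 : expSum m ≤ (k:ℝ) * E := le_trans (expSum_mono hmk) (expSum_le k)
  have h2 : Real.exp 2 ≤ E := Real.exp_le_exp.mpr (by nlinarith)
  have h3 : Real.exp (m:ℝ) ≤ E := Real.exp_le_exp.mpr (by
    have hmR : (m:ℝ) ≤ (k:ℝ) := by exact_mod_cast hmk
    nlinarith)
  have hES2 : 0 ≤ expSum 2 := expSum_nonneg 2
  have hLHS : lam * ((expSum m - expSum 2) + Real.exp 2 + Real.exp m)
      ≤ lam * (((k:ℝ) + 2) * E) := by
    apply mul_le_mul_of_nonneg_left _ (by linarith)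
    nlinarith
  have hlamk : lam < Real.exp (k:ℝ) := by
    have h4 : lam ≤ (Nat.ceil lam : ℝ) := Nat.le_ceil lam
    have h5 : ((Nat.ceil lam : ℕ) : ℝ) + 2 ≤ (k:ℝ) := by
      have : Nat.ceil lam + 2 ≤ k := by omega
      exact_mod_cast this
    have h6 := Real.add_one_le_exp (k:ℝ)
    linarith
  have hk2e : (k:ℝ) + 2 ≤ Real.exp ((k:ℝ)+1) := by
    have := Real.add_one_le_exp ((k:ℝ)+1)
    linarith
  have hmul : lam * ((k:ℝ) + 2) < Real.exp (k:ℝ) * Real.exp ((k:ℝ)+1) :=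
    calc lam * ((k:ℝ)+2) < Real.exp (k:ℝ) * ((k:ℝ)+2) :=
          mul_lt_mul_of_pos_right hlamk (by linarith)
      _ ≤ Real.exp (k:ℝ) * Real.exp ((k:ℝ)+1) :=
          mul_le_mul_of_nonneg_left hk2e (Real.exp_pos _).le
  have hRHS : Real.exp (((k:ℝ)+1)^2) ≤ expSum (k+1) - expSum 2 := by
    have h7 := expSum_sub_ge (le_refl 2) (by omega : 2 < k+1)
    push_cast at h7
    linarith
  have hexp : Real.exp (k:ℝ) * Real.exp ((k:ℝ)+1) * E = Real.exp (((k:ℝ)+1)^2) := by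
    rw [hE, ← Real.exp_add, ← Real.exp_add]; ring_nf
  calc lam * ((expSum m - expSum 2) + Real.exp 2 + Real.exp m)
      ≤ lam * (((k:ℝ)+2) * E) := hLHS
    _ = (lam * ((k:ℝ)+2)) * E := by ring
    _ < (Real.exp (k:ℝ) * Real.exp ((k:ℝ)+1)) * E := mul_lt_mul_of_pos_right hmul hEpos
    _ = Real.exp (((k:ℝ)+1)^2) := hexp
    _ ≤ expSum (k+1) - expSum 2 := hRHS

/-- Eventually, a pointed `λ`-bi-Lipschitz bijection between pointed `C`-nets of
`M_x` and `M_y` matches the pieces: `φ(M_{x,n} ∩ A) = M_{y,n} ∩ B` for all large `n`. -/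
theorem biLip_eventually_matches (x y : ℕ → ℕ) (hx : SeqOK x) (hy : SeqOK y)
    (C lam : ℝ) (hC : 0 ≤ C) (hlam : 1 ≤ lam)
    (A B : Set (ℝ × ℝ)) (hA : IsNet x C A) (hxA : Pp x 2 ∈ A)
    (hB : IsNet y C B) (hyB : Pp y 2 ∈ B)
    (φ : ℝ × ℝ → ℝ × ℝ) (hφ : IsBiLipOn lam A B φ) (hφ2 : φ (Pp x 2) = Pp y 2) :
    ∃ N, 2 ≤ N ∧ ∀ n, N ≤ n → φ '' (Mpart x n ∩ A) = Mpart y n ∩ B := by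
  obtain ⟨hbij, hlip⟩ := hφ
  have hlam0 : 0 < lam := lt_of_lt_of_le one_pos hlam
  set N := Nat.ceil lam + 3 with hNdef
  have fact : ∀ a ∈ A, ∀ m k : ℕ, 2 ≤ m → 2 ≤ k → a ∈ Mpart x m → φ a ∈ Mpart y k →
      (m < k → k < N) ∧ (k < m → m < N) := by
    intro a ha m k hm hk ham hak
    have hda := dist_base_bounds x hx hm ham
    have hdb := dist_base_bounds y hy hk hak
    have hl := hlip (Pp x 2) hxA a ha
    rw [hφ2] at hl
    constructor
    · intro hmk
      by_contra hcon
      have hNk : Nat.ceil lam + 3 ≤ k := by omega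
      have hkey := key_ineq hlam hm hmk hNk
      have h1 : treeDist (Pp y 2) (φ a) ≤ lam * treeDist (Pp x 2) a := hl.2
      have h2 : lam * treeDist (Pp x 2) a ≤
          lam * ((expSum m - expSum 2) + Real.exp 2 + Real.exp m) :=
        mul_le_mul_of_nonneg_left hda.2 hlam0.le
      linarith [hdb.1]
    · intro hkm
      by_contra hcon
      have hNm : Nat.ceil lam + 3 ≤ m := by omega
      have hkey := key_ineq hlam hk hkm hNm
      have h1 : treeDist (Pp x 2) a ≤ lam * treeDist (Pp y 2) (φ a) := by
        have h0 := hl.1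
        have h0' := mul_le_mul_of_nonneg_left h0 hlam0.le
        rwa [← mul_assoc, mul_inv_cancel₀ hlam0.ne', one_mul] at h0'
      have h2 : lam * treeDist (Pp y 2) (φ a) ≤
          lam * ((expSum k - expSum 2) + Real.exp 2 + Real.exp k) :=
        mul_le_mul_of_nonneg_left hdb.2 hlam0.le
      linarith [hda.1]
  refine ⟨N, by omega, ?_⟩
  intro n hn
  apply Set.Subset.antisymm
  · rintro _ ⟨a, ⟨haM, haA⟩, rfl⟩
    have hfB : φ a ∈ B := hbij.mapsTo haA
    obtain ⟨k, hk2, hak⟩ := mem_Mset_iff.mp (hB.1 hfB)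
    have hfact := fact a haA n k (by omega) hk2 haM hak
    have hkn : k = n := by
      rcases lt_trichotomy n k with h | h | h
      · exact absurd (hfact.1 h) (by omega)
      · omega
      · exact absurd (hfact.2 h) (by omega)
    subst hkn
    exact ⟨hak, hfB⟩
  · rintro b ⟨hbM, hbB⟩
    obtain ⟨a, haA, rfl⟩ := hbij.surjOn hbB
    obtain ⟨m, hm2, ham⟩ := mem_Mset_iff.mp (hA.1 haA)
    have hfact := fact a haA m n hm2 (by omega) ham hbM
    have hmn : m = n := by
      rcases lt_trichotomy m n with h | h | h
      · exact absurd (hfact.1 h) (by omega)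
      · omega
      · exact absurd (hfact.2 h) (by omega)
    subst hmn
    exact ⟨a, ⟨ham, haA⟩, rfl⟩
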